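/- For every n ∈ ℕ and i ∈ ℤ there is a sequence of polynomials q_n (independent of i), defined by q_0 = 1, q_1(x) = x, q_{n+1}(x) = x q_n(x) − q_{n−1}(x), such that q_n(X_i)Ω = e_i^{⊗n}, where X_i = A_i + A_i† is the weakly monotone position operator. Consequently, for i_1 > ⋯ > i_k, q_{n_1}(X_{i_1}) ⋯ q_{n_k}(X_{i_k}) Ω = e_{i_1}^{⊗n_1} ⊗ ⋯ ⊗ e_{i_k}^{⊗n_k}, and the vacuum Ω is cyclic for the self-adjoint subalgebra generated by the X_i. -/

import Mathlib

open scoped ComplexOrder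

/-- Index set for the orthonormal basis of the weakly monotone Fock space over `ℓ²(ℤ)`:
decreasing (finite) lists of integers; the empty list corresponds to the vacuum. -/
def WMIdx : Type := {l : List ℤ // l.Chain' (· ≥ ·)}

/-- `i` may be created on top of the tensor indexed by `l`. -/
def WMIdx.ok (i : ℤ) (l : WMIdx) : Prop := ∀ j ∈ l.1.head?, i ≥ j

def WMIdx.cons (i : ℤ) (l : WMIdx) (h : WMIdx.ok i l) : WMIdx :=
  ⟨i :: l.1, List.isChain_cons.mpr ⟨h, l.2⟩⟩

def WMIdx.vac : WMIdx := ⟨[], List.isChain_nil⟩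
theorem WMIdx.chain_replicate (n : ℕ) (i : ℤ) :
    List.Chain' (· ≥ ·) (List.replicate n i) := by
  induction n with
  | zero => exact List.isChain_nil
  | succ m ih =>
    rw [List.replicate_succ]
    refine List.isChain_cons.mpr ⟨?_, ih⟩
    intro y hy
    cases m with
    | zero => simp at hy
    | succ k =>
      rw [List.replicate_succ, List.head?_cons] at hy
      simp only [Option.mem_def, Option.some.injEq] at hy
      omega

section helpers

set_option linter.unusedSectionVars false

variable {H : Type} [NormedAddCommGroup H] [InnerProductSpace ℂ H] [CompleteSpace H]

lemma hb_ext {ι : Type*} (b : HilbertBasis ι ℂ H) {x y : H}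
    (h : ∀ i, inner ℂ (b i) x = (inner ℂ (b i) y : ℂ)) : x = y := by
  apply b.repr.injective
  ext i
  rw [b.repr_apply_apply, b.repr_apply_apply, h]

lemma hb_inner {ι : Type*} [DecidableEq ι] (b : HilbertBasis ι ℂ H) (i j : ι) :
    (inner ℂ (b i) (b j) : ℂ) = if i = j then 1 else 0 :=
  orthonormal_iff_ite.mp b.orthonormal i j

variable (b : HilbertBasis WMIdx ℂ H) (C : ℤ → H →L[ℂ] H)
  (hC : ∀ i l (h : WMIdx.ok i l), C i (b l) = b (WMIdx.cons i l h))
  (hC0 : ∀ i l, ¬ WMIdx.ok i l → C i (b l) = 0)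

lemma wm_cons_inj {i : ℤ} {m m' : WMIdx} {hm hm'} :
    WMIdx.cons i m hm = WMIdx.cons i m' hm' → m = m' := by
  intro h
  have := congrArg Subtype.val h
  simp only [WMIdx.cons, List.cons.injEq] at this
  exact Subtype.ext this.2

include hC hC0 in
lemma adj_cons (i : ℤ) (m : WMIdx) (hm : WMIdx.ok i m) :
    ContinuousLinearMap.adjoint (C i) (b (WMIdx.cons i m hm)) = b m := by
  classical
  apply hb_ext b
  intro m'
  rw [ContinuousLinearMap.adjoint_inner_right]
  by_cases h : WMIdx.ok i m'
  · rw [hC i m' h, hb_inner, hb_inner]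
    congr 1
    simp only [eq_iff_iff]
    constructor
    · exact fun he => wm_cons_inj he
    · rintro rfl; rfl
  · rw [hC0 i m' h, inner_zero_left, hb_inner, if_neg]
    rintro rfl
    exact h hm

include hC hC0 in
lemma adj_zero (i : ℤ) (l : WMIdx) (hl : l.1.head? ≠ some i) :
    ContinuousLinearMap.adjoint (C i) (b l) = 0 := by
  classical
  apply hb_ext b
  intro m'
  rw [ContinuousLinearMap.adjoint_inner_right, inner_zero_right]
  by_cases h : WMIdx.ok i m'
  · rw [hC i m' h, hb_inner, if_neg]
    rintro rfl
    exact hl rfl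
  · rw [hC0 i m' h, inner_zero_left]

end helpers

lemma chain_rep_append (n : ℕ) (i : ℤ) (l : List ℤ) (hl : l.Chain' (· ≥ ·))
    (h : ∀ j ∈ l.head?, i ≥ j) : (List.replicate n i ++ l).Chain' (· ≥ ·) := by
  induction n with
  | zero => simpa
  | succ m ih =>
    rw [List.replicate_succ, List.cons_append]
    refine List.isChain_cons.mpr ⟨?_, ih⟩
    intro y hy
    cases m with
    | zero => exact h y (by simpa using hy)
    | succ k =>
      rw [List.replicate_succ, List.cons_append, List.head?_cons] at hy
      simp only [Option.mem_def, Option.some.injEq] at hy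
      omega

section key

set_option linter.unusedSectionVars false

variable {H : Type} [NormedAddCommGroup H] [InnerProductSpace ℂ H] [CompleteSpace H]
variable (b : HilbertBasis WMIdx ℂ H) (C : ℤ → H →L[ℂ] H)
  (hC : ∀ i l (h : WMIdx.ok i l), C i (b l) = b (WMIdx.cons i l h))
  (hC0 : ∀ i l, ¬ WMIdx.ok i l → C i (b l) = 0)
  (q : ℕ → Polynomial ℂ)
  (hq0 : q 0 = 1) (hq1 : q 1 = Polynomial.X)
  (hqrec : ∀ n : ℕ, q (n + 2) = Polynomial.X * q (n + 1) - q n)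

include hC hC0 hq0 hq1 hqrec in
lemma wm_key (i : ℤ) (l : WMIdx) (hl : ∀ j ∈ l.1.head?, i > j) (n : ℕ) :
    Polynomial.aeval (ContinuousLinearMap.adjoint (C i) + C i) (q n) (b l)
      = b ⟨List.replicate n i ++ l.1,
           chain_rep_append n i l.1 l.2 (fun j hj => (hl j hj).le)⟩ := by
  set X := ContinuousLinearMap.adjoint (C i) + C i with hX
  have hok : ∀ m : ℕ, WMIdx.ok i ⟨List.replicate m i ++ l.1,
      chain_rep_append m i l.1 l.2 (fun j hj => (hl j hj).le)⟩ := by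
    intro m j hj
    cases m with
    | zero => exact (hl j (by simpa using hj)).le
    | succ k =>
      simp only [List.replicate_succ, List.cons_append, List.head?_cons,
        Option.mem_def, Option.some.injEq] at hj
      omega
  have hstep : ∀ m : ℕ, X (b ⟨List.replicate m i ++ l.1,
        chain_rep_append m i l.1 l.2 (fun j hj => (hl j hj).le)⟩)
      = (if m = 0 then 0 else b ⟨List.replicate (m-1) i ++ l.1,
          chain_rep_append (m-1) i l.1 l.2 (fun j hj => (hl j hj).le)⟩)
        + b ⟨List.replicate (m+1) i ++ l.1,
          chain_rep_append (m+1) i l.1 l.2 (fun j hj => (hl j hj).le)⟩ := by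
    intro m
    rw [hX, ContinuousLinearMap.add_apply]
    congr 1
    · cases m with
      | zero =>
        rw [if_pos rfl]
        apply adj_zero b C hC hC0
        intro h
        have := hl i (by simpa using h)
        omega
      | succ k =>
        rw [if_neg (Nat.succ_ne_zero k)]
        have he : (⟨List.replicate (k+1) i ++ l.1,
            chain_rep_append (k+1) i l.1 l.2 (fun j hj => (hl j hj).le)⟩ : WMIdx)
          = WMIdx.cons i ⟨List.replicate k i ++ l.1,
            chain_rep_append k i l.1 l.2 (fun j hj => (hl j hj).le)⟩ (hok k) := by
          apply Subtype.ext
          simp [WMIdx.cons, List.replicate_succ]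
        rw [he]; refine (adj_cons b C hC hC0 i _ (hok k)).trans ?_
        exact congrArg b (Subtype.ext (by norm_num))
    · rw [hC i _ (hok m)]
      apply congrArg b
      apply Subtype.ext
      simp [WMIdx.cons, List.replicate_succ]
  have main : ∀ m : ℕ,
      (Polynomial.aeval X (q m) (b l) = b ⟨List.replicate m i ++ l.1,
        chain_rep_append m i l.1 l.2 (fun j hj => (hl j hj).le)⟩) ∧
      (Polynomial.aeval X (q (m+1)) (b l) = b ⟨List.replicate (m+1) i ++ l.1,
        chain_rep_append (m+1) i l.1 l.2 (fun j hj => (hl j hj).le)⟩) := by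
    intro m
    induction m with
    | zero =>
      constructor
      · rw [hq0, map_one, ContinuousLinearMap.one_apply]
        exact congrArg b (Subtype.ext (by simp))
      · rw [hq1, Polynomial.aeval_X]
        have h0 : b l = b ⟨List.replicate 0 i ++ l.1,
            chain_rep_append 0 i l.1 l.2 (fun j hj => (hl j hj).le)⟩ :=
          congrArg b (Subtype.ext (by simp))
        have := hstep 0
        rw [if_pos rfl, zero_add] at this
        rw [h0, this]
    | succ k ih =>
      refine ⟨ih.2, ?_⟩
      rw [hqrec k, map_sub, map_mul, Polynomial.aeval_X,
        ContinuousLinearMap.sub_apply, ContinuousLinearMap.mul_apply, ih.1, ih.2,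
        hstep (k+1), if_neg (Nat.succ_ne_zero k)]
      simp only [Nat.add_sub_cancel]
      abel
  exact (main n).1

end key

section parts

set_option linter.unusedSectionVars false

variable {H : Type} [NormedAddCommGroup H] [InnerProductSpace ℂ H] [CompleteSpace H]
variable (b : HilbertBasis WMIdx ℂ H) (C : ℤ → H →L[ℂ] H)
  (hC : ∀ i l (h : WMIdx.ok i l), C i (b l) = b (WMIdx.cons i l h))
  (hC0 : ∀ i l, ¬ WMIdx.ok i l → C i (b l) = 0)
  (q : ℕ → Polynomial ℂ)
  (hq0 : q 0 = 1) (hq1 : q 1 = Polynomial.X)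
  (hqrec : ∀ n : ℕ, q (n + 2) = Polynomial.X * q (n + 1) - q n)

include hC hC0 hq0 hq1 hqrec in
lemma wm_prod : ∀ (k : ℕ) (iIdx : Fin k → ℤ), StrictAnti iIdx → ∀ (npow : Fin k → ℕ) (l : WMIdx),
    l.1 = (List.ofFn fun a : Fin k => List.replicate (npow a) (iIdx a)).flatten →
    ((List.ofFn fun a : Fin k =>
        Polynomial.aeval (ContinuousLinearMap.adjoint (C (iIdx a)) + C (iIdx a))
          (q (npow a))).prod) (b WMIdx.vac) = b l := by
  intro k
  induction k with
  | zero =>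
    intro iIdx _ npow l hl
    have : l = WMIdx.vac := Subtype.ext (by simpa [WMIdx.vac] using hl)
    subst this
    simp
  | succ k ih =>
    intro iIdx hanti npow l hl
    have hflat : l.1 = List.replicate (npow 0) (iIdx 0)
        ++ (List.ofFn fun a : Fin k =>
            List.replicate (npow a.succ) (iIdx a.succ)).flatten := by
      rw [hl, List.ofFn_succ, List.flatten_cons]
    have hch : (List.ofFn fun a : Fin k =>
        List.replicate (npow a.succ) (iIdx a.succ)).flatten.Chain' (· ≥ ·) :=
      (hflat ▸ l.2).right_of_append
    set l' : WMIdx := ⟨_, hch⟩ with hl'def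
    have hrest : ((List.ofFn fun a : Fin k =>
        Polynomial.aeval (ContinuousLinearMap.adjoint (C (iIdx a.succ)) + C (iIdx a.succ))
          (q (npow a.succ))).prod) (b WMIdx.vac) = b l' :=
      ih (fun a => iIdx a.succ) (hanti.comp_strictMono Fin.strictMono_succ)
        (fun a => npow a.succ) l' rfl
    have hhead : ∀ j ∈ l'.1.head?, iIdx 0 > j := by
      intro j hj
      have hmem : j ∈ l'.1 := List.mem_of_mem_head? hj
      rw [hl'def] at hmem
      simp only [List.mem_flatten, List.mem_ofFn] at hmem
      obtain ⟨L, ⟨a, rfl⟩, hjL⟩ := hmem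
      rw [List.eq_of_mem_replicate hjL]
      exact hanti (Fin.succ_pos a)
    rw [List.ofFn_succ, List.prod_cons, ContinuousLinearMap.mul_apply, hrest,
      wm_key b C hC hC0 q hq0 hq1 hqrec (iIdx 0) l' hhead (npow 0)]
    exact congrArg b (Subtype.ext hflat.symm)

include hC hC0 in
lemma wm_dense :
    (Submodule.span ℂ {y : H | ∃ T ∈ StarAlgebra.adjoin ℂ
        (Set.range fun i : ℤ => ContinuousLinearMap.adjoint (C i) + C i),
      y = T (b WMIdx.vac)}).topologicalClosure = ⊤ := by
  set X : ℤ → H →L[ℂ] H := fun i => ContinuousLinearMap.adjoint (C i) + C i with hXdef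
  set G : Set H := {y : H | ∃ T ∈ StarAlgebra.adjoin ℂ (Set.range X), y = T (b WMIdx.vac)}
    with hGdef
  set S : Submodule ℂ H := Submodule.span ℂ G with hSdef
  have hXadj : ∀ i, X i ∈ StarAlgebra.adjoin ℂ (Set.range X) :=
    fun i => StarAlgebra.subset_adjoin ℂ _ ⟨i, rfl⟩
  have hmap : ∀ (i : ℤ) (x : H), x ∈ S → X i x ∈ S := by
    intro i x hx
    induction hx using Submodule.span_induction with
    | mem y hy =>
      obtain ⟨T, hT, rfl⟩ := hy
      exact Submodule.subset_span ⟨X i * T, mul_mem (hXadj i) hT, rfl⟩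
    | zero => simpa using Submodule.zero_mem S
    | add y z _ _ hy hz => rw [map_add]; exact Submodule.add_mem S hy hz
    | smul c y _ hy => rw [map_smul]; exact Submodule.smul_mem S c hy
  have hvac : b WMIdx.vac ∈ S :=
    Submodule.subset_span ⟨1, one_mem _, (ContinuousLinearMap.one_apply _).symm⟩
  have hbmem : ∀ (n : ℕ) (l : WMIdx), l.1.length ≤ n → b l ∈ S := by
    intro n
    induction n with
    | zero =>
      intro l hlen
      have : l = WMIdx.vac := Subtype.ext (List.length_eq_zero_iff.mp (Nat.le_zero.mp hlen))
      rw [this]; exact hvac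
    | succ n ihn =>
      intro l hlen
      rcases hlval : l.1 with _ | ⟨i, t⟩
      · have : l = WMIdx.vac := Subtype.ext hlval
        rw [this]; exact hvac
      · have hct := List.isChain_cons.mp (hlval ▸ l.2)
        set ht : WMIdx := ⟨t, hct.2⟩ with htdef
        have hok : WMIdx.ok i ht := hct.1
        have hlcons : l = WMIdx.cons i ht hok := Subtype.ext hlval
        have hbt : b ht ∈ S := ihn ht (by
          have := hlval ▸ hlen
          simpa using Nat.le_of_succ_le_succ (by simpa using this))
        have hXt : X i (b ht) ∈ S := hmap i _ hbt
        have hadj : ContinuousLinearMap.adjoint (C i) (b ht) ∈ S := by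
          rcases ht2 : t with _ | ⟨j, t'⟩
          · rw [adj_zero b C hC hC0 i ht (by show t.head? ≠ some i; rw [ht2]; simp)]
            exact Submodule.zero_mem S
          · by_cases hij : j = i
            · subst hij
              have hct' := List.isChain_cons.mp (ht2 ▸ hct.2)
              have he : ht = WMIdx.cons j ⟨t', hct'.2⟩ hct'.1 := Subtype.ext ht2
              rw [he, (adj_cons b C hC hC0 j ⟨t', hct'.2⟩ hct'.1 :)]
              refine ihn _ ?_
              show t'.length ≤ n
              have := hlval ▸ hlen
              rw [ht2] at this
              simp only [List.length_cons] at this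
              omega
            · rw [adj_zero b C hC hC0 i ht (by
                show t.head? ≠ some i
                rw [ht2]
                simp only [List.head?_cons, ne_eq, Option.some.injEq]
                exact fun h => hij h)]
              exact Submodule.zero_mem S
        have : b l = X i (b ht) - ContinuousLinearMap.adjoint (C i) (b ht) := by
          rw [hlcons, ← hC i ht hok, hXdef]
          simp
        rw [this]
        exact Submodule.sub_mem S hXt hadj
  have hle : Submodule.span ℂ (Set.range b) ≤ S := by
    rw [Submodule.span_le]
    rintro _ ⟨l, rfl⟩
    exact hbmem l.1.length l le_rfl
  refine le_antisymm le_top ?_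
  calc ⊤ = (Submodule.span ℂ (Set.range ⇑b)).topologicalClosure := b.dense_span.symm
  _ ≤ S.topologicalClosure := Submodule.topologicalClosure_mono hle
end parts

/-- the polynomials `q_0 = 1`, `q_1 = X`, `q_{n+2} = X q_{n+1} − q_n`
satisfy `q_n(X_i) Ω = e_i^{⊗n}` for the position operators `X_i = A_i + A_i†`;
consequently `q_{n_1}(X_{i_1}) ⋯ q_{n_k}(X_{i_k}) Ω = e_{i_1}^{⊗n_1} ⊗ ⋯ ⊗ e_{i_k}^{⊗n_k}`
for `i_1 > ⋯ > i_k`, and the vacuum is cyclic for the unital *-algebra generated by the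
`X_i`. -/
theorem wm_vacuum_cyclic_for_positions {H : Type} [NormedAddCommGroup H] [InnerProductSpace ℂ H] [CompleteSpace H]
    (b : HilbertBasis WMIdx ℂ H) (C : ℤ → H →L[ℂ] H)
    (hC : ∀ i l (h : WMIdx.ok i l), C i (b l) = b (WMIdx.cons i l h))
    (hC0 : ∀ i l, ¬ WMIdx.ok i l → C i (b l) = 0)
    (q : ℕ → Polynomial ℂ)
    (hq0 : q 0 = 1) (hq1 : q 1 = Polynomial.X)
    (hqrec : ∀ n : ℕ, q (n + 2) = Polynomial.X * q (n + 1) - q n) :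
    (∀ (n : ℕ) (i : ℤ),
      (Polynomial.aeval (ContinuousLinearMap.adjoint (C i) + C i) (q n)) (b WMIdx.vac)
        = b ⟨List.replicate n i, WMIdx.chain_replicate n i⟩) ∧
    (∀ (k : ℕ) (iIdx : Fin k → ℤ), StrictAnti iIdx → ∀ (npow : Fin k → ℕ) (l : WMIdx),
      l.1 = (List.ofFn fun a : Fin k => List.replicate (npow a) (iIdx a)).flatten →
      ((List.ofFn fun a : Fin k =>
          Polynomial.aeval (ContinuousLinearMap.adjoint (C (iIdx a)) + C (iIdx a))
            (q (npow a))).prod) (b WMIdx.vac) = b l) ∧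
    (Submodule.span ℂ {y : H | ∃ T ∈ StarAlgebra.adjoin ℂ
        (Set.range fun i : ℤ => ContinuousLinearMap.adjoint (C i) + C i),
      y = T (b WMIdx.vac)}).topologicalClosure = ⊤ := by
  refine ⟨?_, wm_prod b C hC hC0 q hq0 hq1 hqrec, wm_dense b C hC hC0⟩
  intro n i
  rw [wm_key b C hC hC0 q hq0 hq1 hqrec i WMIdx.vac (by intro j hj; simp [WMIdx.vac] at hj) n]
  exact congrArg b (Subtype.ext (by simp [WMIdx.vac]))
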